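/- If there exists a sub-optimal action a ≠ a* with r̂(a*) ≤ r̂(a) where r̂ = X(X^T X)^{-1}X^T r, then the NPG iterates satisfy (π* - π_{θ_t})^T r ≥ Δ·π_{θ_1}(a)/(π_{θ_1}(a) + π_{θ_1}(a*)) > 0 for all t, where Δ = r(a*) - max_{a'≠a*} r(a'); hence NPG does not achieve global convergence. -/

import Mathlib

open Matrix

noncomputable def softmaxPolicy {K d : ℕ} (X : Matrix (Fin K) (Fin d) ℝ)
    (θ : Fin d → ℝ) (a : Fin K) : ℝ :=
  Real.exp ((X *ᵥ θ) a) / ∑ a', Real.exp ((X *ᵥ θ) a')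

theorem npg_failure_without_optimal_action_preservation {K d : ℕ}
    (X : Matrix (Fin K) (Fin d) ℝ) (r : Fin K → ℝ) (astar : Fin K)
    (hmax : ∀ a, a ≠ astar → r a < r astar)
    (hrank : IsUnit (Xᵀ * X).det)
    (η : ℝ) (hη : 0 < η)
    (θ : ℕ → Fin d → ℝ)
    (hupdate : ∀ t, θ (t + 1) = θ t + η • ((Xᵀ * X)⁻¹ *ᵥ (Xᵀ *ᵥ r)))
    (a : Fin K) (ha : a ≠ astar)
    (hbad : (X *ᵥ ((Xᵀ * X)⁻¹ *ᵥ (Xᵀ *ᵥ r))) astar ≤ (X *ᵥ ((Xᵀ * X)⁻¹ *ᵥ (Xᵀ *ᵥ r))) a)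
    (hne : (Finset.univ.erase astar).Nonempty) :
    ∀ t, 1 ≤ t →
      (0 < (r astar - (Finset.univ.erase astar).sup' hne r) * softmaxPolicy X (θ 1) a /
          (softmaxPolicy X (θ 1) a + softmaxPolicy X (θ 1) astar)) ∧
      (r astar - (Finset.univ.erase astar).sup' hne r) * softmaxPolicy X (θ 1) a /
          (softmaxPolicy X (θ 1) a + softmaxPolicy X (θ 1) astar) ≤
        (Pi.single astar 1 - softmaxPolicy X (θ t)) ⬝ᵥ r := by
  have hΔ : 0 < r astar - (Finset.univ.erase astar).sup' hne r := by
    rw [sub_pos]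
    exact (Finset.sup'_lt_iff hne).2 fun b hb => hmax b (Finset.ne_of_mem_erase hb)
  set Δ := r astar - (Finset.univ.erase astar).sup' hne r with hΔdef
  have hΔle : ∀ b, b ≠ astar → Δ ≤ r astar - r b := by
    intro b hb
    have hb' : r b ≤ (Finset.univ.erase astar).sup' hne r :=
      Finset.le_sup' r (Finset.mem_erase.2 ⟨hb, Finset.mem_univ b⟩)
    rw [hΔdef]; linarith
  have hpos : ∀ (θ' : Fin d → ℝ) (a' : Fin K), 0 < softmaxPolicy X θ' a' := by
    intro θ' a'
    exact div_pos (Real.exp_pos _)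
      (Finset.sum_pos (fun i _ => Real.exp_pos _) ⟨a', Finset.mem_univ a'⟩)
  have hsum : ∀ θ' : Fin d → ℝ, ∑ a', softmaxPolicy X θ' a' = 1 := by
    intro θ'
    unfold softmaxPolicy
    rw [← Finset.sum_div, div_self]
    exact ne_of_gt (Finset.sum_pos (fun i _ => Real.exp_pos _) ⟨astar, Finset.mem_univ astar⟩)
  set w := (Xᵀ * X)⁻¹ *ᵥ (Xᵀ *ᵥ r) with hw
  have hlog : ∀ s : ℕ, X *ᵥ (θ (s+1)) = fun a' => (X *ᵥ θ 1) a' + (s:ℝ) * (η * (X *ᵥ w) a') := by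
    intro s
    induction s with
    | zero => simp
    | succ n ih =>
      rw [hupdate (n+1), Matrix.mulVec_add, ih, Matrix.mulVec_smul]
      funext a'
      simp only [Pi.add_apply, Pi.smul_apply, smul_eq_mul]
      push_cast
      ring
  intro t ht
  obtain ⟨s, rfl⟩ : ∃ s, t = s + 1 := ⟨t - 1, by omega⟩
  set z := X *ᵥ θ 1 with hz
  set cdir := X *ᵥ w with hcdir
  set q := softmaxPolicy X (θ 1) with hq
  set p := softmaxPolicy X (θ (s+1)) with hp
  have hqa := hpos (θ 1) a
  have hqs := hpos (θ 1) astar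
  have hpa := hpos (θ (s+1)) a
  have hps := hpos (θ (s+1)) astar
  refine ⟨div_pos (mul_pos hΔ hqa) (add_pos hqa hqs), ?_⟩
  -- p a + p astar ≤ 1
  have hple : p a + p astar ≤ 1 := by
    have h1 : ∑ x ∈ ({a, astar} : Finset (Fin K)), p x = p a + p astar :=
      Finset.sum_pair ha
    calc p a + p astar = ∑ x ∈ ({a, astar} : Finset (Fin K)), p x := h1.symm
      _ ≤ ∑ x, p x := Finset.sum_le_sum_of_subset_of_nonneg (Finset.subset_univ _)
          (fun i _ _ => (hpos _ i).le)
      _ = 1 := hsum _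
  -- dot product rewriting
  have hdot : (Pi.single astar 1 - p) ⬝ᵥ r = ∑ a', p a' * (r astar - r a') := by
    rw [sub_dotProduct, single_dotProduct, one_mul]
    have : ∑ a', p a' * (r astar - r a') = (∑ a', p a') * r astar - ∑ a', p a' * r a' := by
      rw [Finset.sum_mul, ← Finset.sum_sub_distrib]
      exact Finset.sum_congr rfl fun i _ => by ring
    rw [this, hsum]
    simp [dotProduct]
  -- lower bound by Δ * (1 - p astar)
  have hgap : Δ * (1 - p astar) ≤ ∑ a', p a' * (r astar - r a') := by
    have hsplit : ∑ a', p a' * (r astar - r a')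
        = p astar * (r astar - r astar) + ∑ a' ∈ Finset.univ.erase astar, p a' * (r astar - r a') :=
      (Finset.add_sum_erase _ _ (Finset.mem_univ astar)).symm
    have herase : ∑ a' ∈ Finset.univ.erase astar, p a' = 1 - p astar := by
      rw [Finset.sum_erase_eq_sub (Finset.mem_univ astar), hsum]
    have hbound : ∑ a' ∈ Finset.univ.erase astar, p a' * Δ
        ≤ ∑ a' ∈ Finset.univ.erase astar, p a' * (r astar - r a') :=
      Finset.sum_le_sum fun i hi =>
        mul_le_mul_of_nonneg_left (hΔle i (Finset.ne_of_mem_erase hi)) (hpos _ i).le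
    rw [hsplit]
    rw [← Finset.sum_mul] at hbound
    rw [herase] at hbound
    nlinarith
  -- ratio monotonicity
  have hratio : q a / (q a + q astar) ≤ p a / (p a + p astar) := by
    have key : ∀ x y S : ℝ, 0 < x → 0 < y → 0 < S →
        (x/S)/(x/S + y/S) = x/(x+y) := by
      intro x y S hx hy hS
      have hxy : x + y ≠ 0 := by positivity
      rw [← add_div]
      field_simp
    have hS1 : (0:ℝ) < ∑ a', Real.exp (z a') :=
      Finset.sum_pos (fun i _ => Real.exp_pos _) ⟨astar, Finset.mem_univ astar⟩
    have hL := hlog s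
    have hS2 : (0:ℝ) < ∑ a', Real.exp (z a' + (s:ℝ) * (η * cdir a')) :=
      Finset.sum_pos (fun i _ => Real.exp_pos _) ⟨astar, Finset.mem_univ astar⟩
    have hq_eq : q a / (q a + q astar)
        = Real.exp (z a) / (Real.exp (z a) + Real.exp (z astar)) := by
      have : ∀ a', q a' = Real.exp (z a') / ∑ a'', Real.exp (z a'') := fun a' => rfl
      rw [this a, this astar]
      exact key _ _ _ (Real.exp_pos _) (Real.exp_pos _) hS1
    have hp_eq : p a / (p a + p astar)
        = Real.exp (z a + (s:ℝ) * (η * cdir a)) /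
          (Real.exp (z a + (s:ℝ) * (η * cdir a)) + Real.exp (z astar + (s:ℝ) * (η * cdir astar))) := by
      have : ∀ a', p a' = Real.exp (z a' + (s:ℝ) * (η * cdir a'))
          / ∑ a'', Real.exp (z a'' + (s:ℝ) * (η * cdir a'')) := by
        intro a'
        rw [hp]
        unfold softmaxPolicy
        rw [hL]
      rw [this a, this astar]
      exact key _ _ _ (Real.exp_pos _) (Real.exp_pos _) hS2
    rw [hq_eq, hp_eq]
    set A := Real.exp (z a) with hA
    set B := Real.exp (z astar) with hB
    set A' := Real.exp (z a + (s:ℝ) * (η * cdir a)) with hA'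
    set B' := Real.exp (z astar + (s:ℝ) * (η * cdir astar)) with hB'
    have hApos : 0 < A := Real.exp_pos _
    have hBpos : 0 < B := Real.exp_pos _
    have hA'pos : 0 < A' := Real.exp_pos _
    have hB'pos : 0 < B' := Real.exp_pos _
    have hcross : A * B' ≤ A' * B := by
      rw [hA, hB, hA', hB', ← Real.exp_add, ← Real.exp_add]
      apply Real.exp_le_exp.2
      have : (s:ℝ) * (η * cdir astar) ≤ (s:ℝ) * (η * cdir a) :=
        mul_le_mul_of_nonneg_left (mul_le_mul_of_nonneg_left hbad hη.le) (Nat.cast_nonneg s)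
      linarith
    rw [div_le_div_iff₀ (by linarith) (by linarith)]
    nlinarith
  -- ratio ≤ 1 - p astar
  have hrle : p a / (p a + p astar) ≤ 1 - p astar := by
    rw [div_le_iff₀ (by linarith)]
    nlinarith
  rw [hdot]
  calc Δ * q a / (q a + q astar) = Δ * (q a / (q a + q astar)) := by ring
    _ ≤ Δ * (p a / (p a + p astar)) := mul_le_mul_of_nonneg_left hratio hΔ.le
    _ ≤ Δ * (1 - p astar) := mul_le_mul_of_nonneg_left hrle hΔ.le
    _ ≤ ∑ a', p a' * (r astar - r a') := hgap
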